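/- Let P ⊆ ℝ^n be a 0/1 polytope in which every vertex has exactly M coordinates equal to 1, let x^0 be a vertex of P, let c ∈ ℝ^n, and set v = 1 − 2x^0. Then every Shadow-rule path on P with auxiliary vector v and objective c starting at x^0 has length at most M and contains a vertex maximizing ⟨c,·⟩ over P. -/

import Mathlib

open Finset

attribute [local instance] Classical.propDecidable

noncomputable section

/-- Standard dot product on `Fin n → ℝ`. -/
def dotR {n : ℕ} (c x : Fin n → ℝ) : ℝ := ∑ i, c i * x i

/-- A polytope: the convex hull of a finite nonempty set of points. -/
def IsPolytope {n : ℕ} (P : Set (Fin n → ℝ)) : Prop :=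
  ∃ V : Finset (Fin n → ℝ), V.Nonempty ∧ P = convexHull ℝ (V : Set (Fin n → ℝ))

/-- A 0/1 polytope: the convex hull of a finite nonempty subset of `{0,1}^n`. -/
def IsPolytope01 {n : ℕ} (P : Set (Fin n → ℝ)) : Prop :=
  ∃ V : Finset (Fin n → ℝ), V.Nonempty ∧ (∀ w ∈ V, ∀ i, w i = 0 ∨ w i = 1) ∧
    P = convexHull ℝ (V : Set (Fin n → ℝ))

/-- A vertex of `P` is an extreme point of `P`. -/
def IsVertex {n : ℕ} (P : Set (Fin n → ℝ)) (x : Fin n → ℝ) : Prop :=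
  x ∈ P.extremePoints ℝ

/-- Two distinct vertices are adjacent when the segment between them is a face. -/
def Adjacent {n : ℕ} (P : Set (Fin n → ℝ)) (x y : Fin n → ℝ) : Prop :=
  IsVertex P x ∧ IsVertex P y ∧ x ≠ y ∧ IsExtreme ℝ P (segment ℝ x y)

/-- `u` is a `w`-improving neighbor of `x`. -/
def ImpNbr {n : ℕ} (P : Set (Fin n → ℝ)) (w x u : Fin n → ℝ) : Prop :=
  Adjacent P x u ∧ dotR w x < dotR w u

/-- A Shadow-rule path on `P` with auxiliary vector `v` and objective `c`:
vertices `x 0, …, x k`, each step a `v`-improving neighbor maximizing the slope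
`⟨c, u − xᵢ⟩ / ⟨v, u − xᵢ⟩` over all `v`-improving neighbors, and the last vertex
has no `v`-improving neighbor. -/
def ShadowPath {n : ℕ} (P : Set (Fin n → ℝ)) (c v : Fin n → ℝ) (k : ℕ)
    (x : ℕ → Fin n → ℝ) : Prop :=
  (∀ i ≤ k, IsVertex P (x i)) ∧
  (∀ i < k, ImpNbr P v (x i) (x (i + 1)) ∧
    ∀ u, ImpNbr P v (x i) u →
      dotR c (u - x i) / dotR v (u - x i)
        ≤ dotR c (x (i + 1) - x i) / dotR v (x (i + 1) - x i)) ∧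
  (∀ u, ¬ ImpNbr P v (x k) u)

/-- `f(u)` relative to `x0`: the largest index (in `1, …, n` labelling) where `u`
differs from `x0`, and `0` if there is none. -/
def lastIdx {n : ℕ} (x0 u : Fin n → ℝ) : ℕ :=
  (Finset.univ.filter fun j : Fin n => u j ≠ x0 j).sup fun j => (j : ℕ) + 1

/-- `f(w)` for a 0/1 vector: the largest index (in `1, …, n` labelling) with
`w j = 1`, and `0` for the zero vector. -/
def lastOne {n : ℕ} (w : Fin n → ℝ) : ℕ :=
  (Finset.univ.filter fun j : Fin n => w j = 1).sup fun j => (j : ℕ) + 1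

lemma dotR_sub {n : ℕ} (w y z : Fin n → ℝ) : dotR w (y - z) = dotR w y - dotR w z := by
  simp [dotR, mul_sub, Finset.sum_sub_distrib]

lemma dotR_isLinear {n : ℕ} (w : Fin n → ℝ) : IsLinearMap ℝ (dotR w) := by
  constructor
  · intro a b; simp [dotR, mul_add, Finset.sum_add_distrib]
  · intro t a; simp [dotR, Finset.mul_sum]; ring_nf; simp [mul_comm, mul_assoc, mul_left_comm]

lemma dotR_neg {n : ℕ} (w y : Fin n → ℝ) : dotR (-w) y = - dotR w y := by
  simp [dotR]

lemma dotR_comb {n : ℕ} (c v y : Fin n → ℝ) (t : ℝ) :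
    dotR (fun i => c i - t * v i) y = dotR c y - t * dotR v y := by
  simp [dotR, sub_mul, Finset.sum_sub_distrib, Finset.mul_sum, mul_assoc]

lemma dotR_self_pos {n : ℕ} {q : Fin n → ℝ} (hq : q ≠ 0) : 0 < dotR q q := by
  have : ∃ i, q i ≠ 0 := by
    by_contra h; push_neg at h; exact hq (funext h)
  obtain ⟨i, hi⟩ := this
  have hpos : 0 < q i * q i := by rcases hi.lt_or_gt with h | h <;> nlinarith
  have : ∀ j, 0 ≤ q j * q j := fun j => mul_self_nonneg _
  exact Finset.sum_pos' (fun j _ => this j) ⟨i, Finset.mem_univ i, hpos⟩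

lemma dot_le_of_forall {n : ℕ} (V : Finset (Fin n → ℝ)) (w : Fin n → ℝ) (B : ℝ)
    (h : ∀ z ∈ V, dotR w z ≤ B) : ∀ p ∈ convexHull ℝ (V : Set (Fin n → ℝ)), dotR w p ≤ B := by
  intro p hp
  exact convexHull_min (fun z hz => h z (by exact_mod_cast hz)) (convex_halfSpace_le (dotR_isLinear w) B) hp

/-- The argmax face of a functional over the hull of a finite set. -/
lemma face_extreme {n : ℕ} (V : Finset (Fin n → ℝ)) (g : Fin n → ℝ) (x : Fin n → ℝ)
    (hxV : x ∈ V) (hmax : ∀ z ∈ V, dotR g z ≤ dotR g x) :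
    (∀ p ∈ convexHull ℝ (V : Set (Fin n → ℝ)), dotR g p = dotR g x →
      p ∈ convexHull ℝ ((V.filter fun z => dotR g z = dotR g x : Finset _) : Set (Fin n → ℝ))) ∧
    IsExtreme ℝ (convexHull ℝ (V : Set (Fin n → ℝ)))
      (convexHull ℝ ((V.filter fun z => dotR g z = dotR g x : Finset _) : Set (Fin n → ℝ))) := by
  set S := V.filter fun z => dotR g z = dotR g x with hS
  have hSV : S ⊆ V := Finset.filter_subset _ _
  have hdot_sum : ∀ (T : Finset (Fin n → ℝ)) (μ : (Fin n → ℝ) → ℝ),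
      dotR g (∑ y ∈ T, μ y • y) = ∑ y ∈ T, μ y * dotR g y := by
    intro T μ
    induction T using Finset.induction_on with
    | empty => simp [dotR]
    | insert _ _ hnotmem ih =>
        rw [Finset.sum_insert hnotmem, Finset.sum_insert hnotmem, (dotR_isLinear g).map_add,
          (dotR_isLinear g).map_smul, ih, smul_eq_mul]
  have part1 : ∀ p ∈ convexHull ℝ (V : Set (Fin n → ℝ)), dotR g p = dotR g x →
      p ∈ convexHull ℝ (S : Set (Fin n → ℝ)) := by
    intro p hp hpeq
    rw [Finset.convexHull_eq] at hp
    obtain ⟨μ, hμ0, hμ1, hc⟩ := hp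
    rw [Finset.centerMass_eq_of_sum_1 _ _ hμ1] at hc
    simp only [id_eq] at hc
    have hzero : ∑ y ∈ V, μ y * (dotR g x - dotR g y) = 0 := by
      have : ∑ y ∈ V, μ y * dotR g y = dotR g p := by rw [← hc, hdot_sum]
      have h2 : ∑ y ∈ V, μ y * dotR g x = dotR g x := by
        rw [← Finset.sum_mul, hμ1, one_mul]
      calc ∑ y ∈ V, μ y * (dotR g x - dotR g y)
          = ∑ y ∈ V, (μ y * dotR g x - μ y * dotR g y) := by
            apply Finset.sum_congr rfl; intros; ring
        _ = (∑ y ∈ V, μ y * dotR g x) - ∑ y ∈ V, μ y * dotR g y := Finset.sum_sub_distrib _ _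
        _ = dotR g x - dotR g p := by rw [h2, this]
        _ = 0 := by rw [hpeq, sub_self]
    have hvanish : ∀ y ∈ V, μ y ≠ 0 → y ∈ S := by
      intro y hy hμy
      have hall := (Finset.sum_eq_zero_iff_of_nonneg (fun y hy =>
        mul_nonneg (hμ0 y hy) (sub_nonneg.2 (hmax y hy)))).1 hzero y hy
      have : dotR g x - dotR g y = 0 := by
        rcases mul_eq_zero.1 hall with h | h
        · exact absurd h hμy
        · exact h
      exact Finset.mem_filter.2 ⟨hy, by linarith⟩
    have hsumS : ∑ y ∈ S, μ y = 1 := by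
      rw [← hμ1]
      apply Finset.sum_subset hSV
      intro y hy hyS
      by_contra hne; exact hyS (hvanish y hy hne)
    have hpS : ∑ y ∈ S, μ y • y = p := by
      rw [← hc]
      apply Finset.sum_subset hSV
      intro y hy hyS
      have : μ y = 0 := by by_contra hne; exact hyS (hvanish y hy hne)
      simp [this]
    have := S.centerMass_mem_convexHull (w := μ) (z := id)
      (fun y hy => hμ0 y (hSV hy)) (by rw [hsumS]; norm_num) (fun y hy => Finset.mem_coe.2 hy)
    rwa [Finset.centerMass_eq_of_sum_1 _ _ hsumS, show (∑ y ∈ S, μ y • id y) = p from hpS] at this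
  refine ⟨part1, convexHull_mono (by exact_mod_cast hSV), ?_⟩
  intro x1 hx1 x2 hx2 p hpS hpseg
  have hgS : ∀ q ∈ convexHull ℝ (S : Set (Fin n → ℝ)), dotR g q = dotR g x := by
    intro q hq
    have hle := dot_le_of_forall S g (dotR g x)
      (fun z hz => le_of_eq (Finset.mem_filter.1 hz).2) q hq
    have hge := dot_le_of_forall S (-g) (-(dotR g x))
      (fun z hz => by rw [dotR_neg]; exact neg_le_neg (le_of_eq (Finset.mem_filter.1 hz).2.symm)) q hq
    rw [dotR_neg] at hge; linarith
  obtain ⟨t1, t2, ht1, ht2, hsum, hcomb⟩ := hpseg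
  have hp1 : dotR g x1 ≤ dotR g x := dot_le_of_forall V g (dotR g x) hmax x1 hx1
  have hp2 : dotR g x2 ≤ dotR g x := dot_le_of_forall V g (dotR g x) hmax x2 hx2
  have hpeq : dotR g p = dotR g x := hgS p hpS
  have hcombval : t1 * dotR g x1 + t2 * dotR g x2 = dotR g x := by
    rw [← hpeq, ← hcomb, (dotR_isLinear g).map_add, (dotR_isLinear g).map_smul,
      (dotR_isLinear g).map_smul]; simp [smul_eq_mul]
  have he1 : dotR g x1 = dotR g x := by
    by_contra hne
    have hlt : dotR g x1 < dotR g x := lt_of_le_of_ne hp1 hne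
    have hsplit : t1 * dotR g x + t2 * dotR g x = dotR g x := by rw [← add_mul, hsum, one_mul]
    nlinarith [mul_lt_mul_of_pos_left hlt ht1, mul_le_mul_of_nonneg_left hp2 ht2.le]
  have he2 : dotR g x2 = dotR g x := by
    by_contra hne
    have hlt : dotR g x2 < dotR g x := lt_of_le_of_ne hp2 hne
    have hsplit : t1 * dotR g x + t2 * dotR g x = dotR g x := by rw [← add_mul, hsum, one_mul]
    nlinarith [mul_lt_mul_of_pos_left hlt ht2]
  exact part1 x1 hx1 he1

lemma exposing {n : ℕ} (V : Finset (Fin n → ℝ)) (x : Fin n → ℝ)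
    (hx : x ∈ (convexHull ℝ (V : Set (Fin n → ℝ))).extremePoints ℝ) :
    ∃ a : Fin n → ℝ, ∀ z ∈ V.erase x, dotR a z < dotR a x := by
  have hxV : x ∈ V := by
    have := extremePoints_convexHull_subset hx
    exact_mod_cast this
  by_cases hne : (V.erase x).Nonempty
  · have hxnot : x ∉ convexHull ℝ ((V.erase x : Finset _) : Set (Fin n → ℝ)) := by
      intro hmem
      have heq : convexHull ℝ (V : Set (Fin n → ℝ))
          = convexHull ℝ ((V.erase x : Finset _) : Set (Fin n → ℝ)) := by
        apply Set.Subset.antisymm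
        · apply convexHull_min _ (convex_convexHull ℝ _)
          intro z hz
          rcases eq_or_ne z x with rfl | hzx
          · exact hmem
          · exact subset_convexHull ℝ _ (by exact_mod_cast Finset.mem_erase.2 ⟨hzx, by exact_mod_cast hz⟩)
        · exact convexHull_mono (by exact_mod_cast Finset.erase_subset x V)
      rw [heq] at hx
      have := extremePoints_convexHull_subset hx
      have : x ∈ V.erase x := by exact_mod_cast this
      exact (Finset.mem_erase.1 this).1 rfl
    have hclosed : IsClosed (convexHull ℝ ((V.erase x : Finset _) : Set (Fin n → ℝ))) :=
      ((V.erase x).finite_toSet.isCompact_convexHull ℝ).isClosed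
    obtain ⟨f, u, hfu, hux⟩ := geometric_hahn_banach_closed_point
      (convex_convexHull ℝ _) hclosed hxnot
    refine ⟨fun i => f (fun j => if i = j then 1 else 0), ?_⟩
    have hrep : ∀ y : Fin n → ℝ, dotR (fun i => f (fun j => if i = j then 1 else 0)) y = f y := by
      intro y
      rw [show f y = (f : (Fin n → ℝ) →ₗ[ℝ] ℝ) y from rfl, LinearMap.pi_apply_eq_sum_univ]
      apply Finset.sum_congr rfl
      intro i _
      simp [dotR, mul_comm]
    intro z hz
    rw [hrep, hrep]
    exact lt_trans (hfu z (subset_convexHull ℝ _ (by exact_mod_cast hz))) hux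
  · exact ⟨0, fun z hz => absurd ⟨z, hz⟩ hne⟩

lemma dotR_comb_add {n : ℕ} (h a y : Fin n → ℝ) (t : ℝ) :
    dotR (fun i => h i + t * a i) y = dotR h y + t * dotR a y := by
  simp [dotR, add_mul, Finset.sum_add_distrib, Finset.mul_sum, mul_assoc]

lemma rotate_face {n : ℕ} (V : Finset (Fin n → ℝ)) (x a h : Fin n → ℝ)
    (hxV : x ∈ V) (hW : (V.erase x).Nonempty)
    (ha : ∀ z ∈ V.erase x, dotR a z < dotR a x) :
    ∃ (S : Finset (Fin n → ℝ)) (σ : ℝ),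
      x ∈ S ∧ S ⊆ V ∧
      IsExtreme ℝ (convexHull ℝ (V : Set (Fin n → ℝ))) (convexHull ℝ (S : Set (Fin n → ℝ))) ∧
      (∀ z ∈ V.erase x, (z ∈ S ↔ (dotR h z - dotR h x) / (dotR a x - dotR a z) = σ)) ∧
      (∃ z ∈ V.erase x, z ∈ S) ∧
      (∀ z ∈ V.erase x, (dotR h z - dotR h x) / (dotR a x - dotR a z) ≤ σ) := by
  set ρ : (Fin n → ℝ) → ℝ := fun z => (dotR h z - dotR h x) / (dotR a x - dotR a z) with hρ
  obtain ⟨zm, hzm, hmax⟩ := (V.erase x).exists_max_image ρ hW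
  set σ := ρ zm with hσ
  set g : Fin n → ℝ := fun i => h i + σ * a i with hg
  have htpos : ∀ z ∈ V.erase x, 0 < dotR a x - dotR a z := fun z hz => sub_pos.2 (ha z hz)
  have hkey : ∀ z ∈ V.erase x,
      dotR g z - dotR g x = (ρ z - σ) * (dotR a x - dotR a z) := by
    intro z hz
    have htne : dotR a x - dotR a z ≠ 0 := ne_of_gt (htpos z hz)
    have : ρ z * (dotR a x - dotR a z) = dotR h z - dotR h x := div_mul_cancel₀ _ htne
    rw [hg]
    rw [dotR_comb_add, dotR_comb_add]
    nlinarith [this]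
  have hgmax : ∀ z ∈ V, dotR g z ≤ dotR g x := by
    intro z hz
    rcases eq_or_ne z x with rfl | hzx
    · exact le_refl _
    · have hzW : z ∈ V.erase x := Finset.mem_erase.2 ⟨hzx, hz⟩
      have := hkey z hzW
      nlinarith [htpos z hzW, hmax z hzW]
  obtain ⟨hpart1, hext⟩ := face_extreme V g x hxV hgmax
  refine ⟨V.filter fun z => dotR g z = dotR g x, σ, Finset.mem_filter.2 ⟨hxV, rfl⟩,
    Finset.filter_subset _ _, hext, ?_, ?_, hmax⟩
  · intro z hz
    constructor
    · intro hzS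
      have heq := (Finset.mem_filter.1 hzS).2
      have := hkey z hz
      have h0 : (ρ z - σ) * (dotR a x - dotR a z) = 0 := by linarith
      rcases mul_eq_zero.1 h0 with h' | h'
      · linarith
      · exact absurd h' (ne_of_gt (htpos z hz))
    · intro hρz
      refine Finset.mem_filter.2 ⟨Finset.mem_of_mem_erase hz, ?_⟩
      have h0 : ρ z - σ = 0 := sub_eq_zero.2 hρz
      have := hkey z hz
      rw [h0, zero_mul] at this
      linarith
  · exact ⟨zm, hzm, Finset.mem_filter.2 ⟨Finset.mem_of_mem_erase hzm, by
      have := hkey zm hzm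
      simp only [← hσ, sub_self, zero_mul] at this
      linarith⟩⟩

lemma dotR_smul_arg {n : ℕ} (w y : Fin n → ℝ) (t : ℝ) : dotR w (t • y) = t * dotR w y := by
  have := (dotR_isLinear w).map_smul t y
  simpa [smul_eq_mul] using this

lemma key {n : ℕ} : ∀ (m : ℕ) (V : Finset (Fin n → ℝ)), V.card ≤ m → ∀ (x w : Fin n → ℝ),
    x ∈ (convexHull ℝ (V : Set (Fin n → ℝ))).extremePoints ℝ →
    (∃ z ∈ V, dotR w x < dotR w z) →
    ∃ u, u ∈ (convexHull ℝ (V : Set (Fin n → ℝ))).extremePoints ℝ ∧ u ≠ x ∧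
      IsExtreme ℝ (convexHull ℝ (V : Set (Fin n → ℝ))) (segment ℝ x u) ∧ dotR w x < dotR w u := by
  intro m
  induction m with
  | zero =>
      intro V hc x w _ himp
      obtain ⟨z, hz, _⟩ := himp
      have := Finset.card_pos.2 ⟨z, hz⟩
      omega
  | succ m ih =>
    intro V hcard x w hx himp
    obtain ⟨z0, hz0V, hz0⟩ := himp
    have hxV : x ∈ V := by exact_mod_cast extremePoints_convexHull_subset hx
    have hz0x : z0 ≠ x := fun h => by rw [h] at hz0; exact lt_irrefl _ hz0
    have hz0W : z0 ∈ V.erase x := Finset.mem_erase.2 ⟨hz0x, hz0V⟩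
    have hW : (V.erase x).Nonempty := ⟨z0, hz0W⟩
    obtain ⟨a, ha⟩ := exposing V x hx
    have recur : ∀ S : Finset (Fin n → ℝ), x ∈ S → S ⊆ V → S.card < V.card →
        IsExtreme ℝ (convexHull ℝ (V : Set (Fin n → ℝ))) (convexHull ℝ (S : Set (Fin n → ℝ))) →
        (∃ z ∈ S, dotR w x < dotR w z) →
        ∃ u, u ∈ (convexHull ℝ (V : Set (Fin n → ℝ))).extremePoints ℝ ∧ u ≠ x ∧
          IsExtreme ℝ (convexHull ℝ (V : Set (Fin n → ℝ))) (segment ℝ x u) ∧ dotR w x < dotR w u := by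
      intro S hxS hSV hlt hext himpS
      have hxS' : x ∈ (convexHull ℝ (S : Set (Fin n → ℝ))).extremePoints ℝ :=
        inter_extremePoints_subset_extremePoints_of_subset
          (convexHull_mono (by exact_mod_cast hSV))
          ⟨subset_convexHull ℝ _ (by exact_mod_cast hxS), hx⟩
      obtain ⟨u, hu1, hu2, hu3, hu4⟩ := ih S (by omega) x w hxS' himpS
      exact ⟨u, hext.extremePoints_subset_extremePoints hu1, hu2, hext.trans hu3, hu4⟩
    obtain ⟨S, σ, hxS, hSV, hext, hchar, ⟨zS, hzSW, hzSS⟩, hbound⟩ := rotate_face V x a w hxV hW ha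
    have hρ0 : 0 < (dotR w z0 - dotR w x) / (dotR a x - dotR a z0) :=
      div_pos (by linarith) (sub_pos.2 (ha z0 hz0W))
    have hσpos : 0 < σ := lt_of_lt_of_le hρ0 (hbound z0 hz0W)
    have himpall : ∀ z ∈ V.erase x, z ∈ S → dotR w x < dotR w z := by
      intro z hz hzS
      have hρz := (hchar z hz).1 hzS
      have ht := sub_pos.2 (ha z hz)
      have : dotR w z - dotR w x = σ * (dotR a x - dotR a z) := (div_eq_iff (ne_of_gt ht)).1 hρz
      nlinarith [mul_pos hσpos ht]
    by_cases hSeq : S = V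
    · by_cases hcol : ∀ z1 ∈ V.erase x, ∀ z2 ∈ V.erase x,
          (dotR a x - dotR a z2) • (z1 - x) = (dotR a x - dotR a z1) • (z2 - x)
      · -- collinear: the hull is a segment
        obtain ⟨u, huW, humax⟩ := (V.erase x).exists_max_image (fun z => dotR a x - dotR a z) hW
        have huV : u ∈ V := Finset.mem_of_mem_erase huW
        have hux : u ≠ x := (Finset.mem_erase.1 huW).1
        have htu : 0 < dotR a x - dotR a u := sub_pos.2 (ha u huW)
        have huniq : ∀ z ∈ V.erase x, dotR a x - dotR a z = dotR a x - dotR a u → z = u := by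
          intro z hz hzt
          have h1 := hcol z hz u huW
          rw [hzt] at h1
          have := smul_right_injective (Fin n → ℝ) (ne_of_gt htu) h1
          exact sub_left_injective this
        have hmax' : ∀ z ∈ V, dotR (-a) z ≤ dotR (-a) u := by
          intro z hz
          rw [dotR_neg, dotR_neg]
          rcases eq_or_ne z x with rfl | hzx
          · linarith
          · have := humax z (Finset.mem_erase.2 ⟨hzx, hz⟩)
            linarith
        obtain ⟨_, hextu⟩ := face_extreme V (-a) u huV hmax'
        have hS' : (V.filter fun z => dotR (-a) z = dotR (-a) u) = {u} := by
          apply Finset.ext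
          intro z
          simp only [Finset.mem_filter, Finset.mem_singleton]
          constructor
          · rintro ⟨hzV, heq⟩
            rw [dotR_neg, dotR_neg] at heq
            rcases eq_or_ne z x with rfl | hzx
            · exfalso; linarith [ha u huW]
            · exact huniq z (Finset.mem_erase.2 ⟨hzx, hzV⟩) (by linarith)
          · rintro rfl; exact ⟨huV, rfl⟩
        rw [hS'] at hextu
        have hupt : u ∈ (convexHull ℝ (V : Set (Fin n → ℝ))).extremePoints ℝ := by
          rw [← isExtreme_singleton]
          simpa [convexHull_singleton] using hextu
        have hsegeq : convexHull ℝ (V : Set (Fin n → ℝ)) = segment ℝ x u := by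
          apply Set.Subset.antisymm
          · apply convexHull_min _ (convex_segment x u)
            intro z hz
            have hzV : z ∈ V := by exact_mod_cast hz
            rcases eq_or_ne z x with hzeq | hzx
            · rw [hzeq]; exact left_mem_segment ℝ x u
            · have hzW : z ∈ V.erase x := Finset.mem_erase.2 ⟨hzx, hzV⟩
              have hrel := hcol z hzW u huW
              have htz : 0 < dotR a x - dotR a z := sub_pos.2 (ha z hzW)
              rw [segment_eq_image']
              refine ⟨(dotR a x - dotR a z) / (dotR a x - dotR a u),
                ⟨div_nonneg htz.le htu.le, (div_le_one htu).2 (humax z hzW)⟩, ?_⟩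
              have : z - x = ((dotR a x - dotR a z) / (dotR a x - dotR a u)) • (u - x) := by
                have h2 := congrArg (fun y => (dotR a x - dotR a u)⁻¹ • y) hrel
                rw [inv_smul_smul₀ (ne_of_gt htu)] at h2
                rw [h2, smul_smul, div_eq_inv_mul]
              show x + ((dotR a x - dotR a z) / (dotR a x - dotR a u)) • (u - x) = z
              rw [← this]; abel
          · rw [← convexHull_pair]
            apply convexHull_mono
            intro z hz
            rcases hz with h | h
            · rw [h]; exact_mod_cast hxV
            · rw [Set.mem_singleton_iff] at h; rw [h]; exact_mod_cast huV
        refine ⟨u, hupt, hux, ?_, himpall u huW (by rw [hSeq]; exact huV)⟩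
        rw [hsegeq]
      · push_neg at hcol
        obtain ⟨z1, hz1, z2, hz2, hq⟩ := hcol
        set q : Fin n → ℝ := (dotR a x - dotR a z2) • (z1 - x) - (dotR a x - dotR a z1) • (z2 - x)
          with hqdef
        have hqne : q ≠ 0 := sub_ne_zero.2 hq
        obtain ⟨S₂, σ₂, hxS₂, hS₂V, hext₂, hchar₂, ⟨zS₂, hzS₂W, hzS₂S⟩, hbound₂⟩ :=
          rotate_face V x a q hxV hW ha
        have hS₂ne : S₂ ≠ V := by
          intro hEq
          have ht1 : 0 < dotR a x - dotR a z1 := sub_pos.2 (ha z1 hz1)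
          have ht2 : 0 < dotR a x - dotR a z2 := sub_pos.2 (ha z2 hz2)
          have h1 : (dotR q z1 - dotR q x) / (dotR a x - dotR a z1) = σ₂ :=
            (hchar₂ z1 hz1).1 (by rw [hEq]; exact Finset.mem_of_mem_erase hz1)
          have h2 : (dotR q z2 - dotR q x) / (dotR a x - dotR a z2) = σ₂ :=
            (hchar₂ z2 hz2).1 (by rw [hEq]; exact Finset.mem_of_mem_erase hz2)
          have hcross : (dotR q z1 - dotR q x) * (dotR a x - dotR a z2)
              = (dotR q z2 - dotR q x) * (dotR a x - dotR a z1) := by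
            rw [div_eq_iff (ne_of_gt ht1)] at h1
            rw [div_eq_iff (ne_of_gt ht2)] at h2
            rw [h1, h2]; ring
          have hqq : dotR q q = 0 := by
            have e1 : dotR q z1 - dotR q x = dotR q (z1 - x) := (dotR_sub q z1 x).symm
            have e2 : dotR q z2 - dotR q x = dotR q (z2 - x) := (dotR_sub q z2 x).symm
            have expand : dotR q q = (dotR a x - dotR a z2) * dotR q (z1 - x)
                - (dotR a x - dotR a z1) * dotR q (z2 - x) := by
              conv_lhs => rw [hqdef]
              rw [dotR_sub, dotR_smul_arg, dotR_smul_arg]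
            rw [expand, ← e1, ← e2]
            nlinarith [hcross]
          exact absurd hqq (ne_of_gt (dotR_self_pos hqne))
        have hcard2 : S₂.card < V.card :=
          Finset.card_lt_card (Finset.ssubset_iff_subset_ne.2 ⟨hS₂V, hS₂ne⟩)
        exact recur S₂ hxS₂ hS₂V hcard2 hext₂
          ⟨zS₂, hzS₂S, himpall zS₂ hzS₂W (by rw [hSeq]; exact Finset.mem_of_mem_erase hzS₂W)⟩
    · have hcardS : S.card < V.card :=
        Finset.card_lt_card (Finset.ssubset_iff_subset_ne.2 ⟨hSV, hSeq⟩)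
      exact recur S hxS hSV hcardS hext ⟨zS, hzSS, himpall zS hzSW hzSS⟩

/-- A vertex all of whose neighbors are no better is a global maximizer. -/
lemma loc {n : ℕ} (V : Finset (Fin n → ℝ)) (p w : Fin n → ℝ)
    (hp : p ∈ (convexHull ℝ (V : Set (Fin n → ℝ))).extremePoints ℝ)
    (H : ∀ u, u ∈ (convexHull ℝ (V : Set (Fin n → ℝ))).extremePoints ℝ → u ≠ p →
      IsExtreme ℝ (convexHull ℝ (V : Set (Fin n → ℝ))) (segment ℝ p u) → dotR w u ≤ dotR w p) :
    ∀ y ∈ convexHull ℝ (V : Set (Fin n → ℝ)), dotR w y ≤ dotR w p := by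
  by_contra hcon
  push_neg at hcon
  obtain ⟨y, hy, hlt⟩ := hcon
  have hex : ∃ z ∈ V, dotR w p < dotR w z := by
    by_contra hno
    push_neg at hno
    exact absurd (dot_le_of_forall V w (dotR w p) hno y hy) (not_le.2 hlt)
  obtain ⟨u, hu1, hu2, hu3, hu4⟩ := key V.card V le_rfl p w hp hex
  exact absurd (H u hu1 hu2 hu3) (not_le.2 hu4)

def interCard {n : ℕ} (x0 u : Fin n → ℝ) : ℕ :=
  (Finset.univ.filter fun i => x0 i = 1 ∧ u i = 1).card

lemma dotv_eq {n : ℕ} (x0 u : Fin n → ℝ) (M : ℕ)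
    (h01u : ∀ i, u i = 0 ∨ u i = 1) (h01x : ∀ i, x0 i = 0 ∨ x0 i = 1)
    (hMu : (Finset.univ.filter fun i : Fin n => u i = 1).card = M) :
    dotR (fun i => 1 - 2 * x0 i) u = (M : ℝ) - 2 * (interCard x0 u : ℝ) := by
  have hcalc : dotR (fun i => 1 - 2 * x0 i) u
      = ∑ i, ((if u i = 1 then (1:ℝ) else 0) - 2 * (if x0 i = 1 ∧ u i = 1 then (1:ℝ) else 0)) := by
    apply Finset.sum_congr rfl
    intro i _
    rcases h01u i with h | h
    · simp only [h]; norm_num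
    · rcases h01x i with h0 | h0 <;> · simp only [h, h0]; norm_num
  rw [hcalc, Finset.sum_sub_distrib, ← Finset.mul_sum, Finset.sum_boole, Finset.sum_boole, hMu]
  rfl

lemma interCard_le {n : ℕ} (x0 u : Fin n → ℝ) (M : ℕ)
    (hMx : (Finset.univ.filter fun i : Fin n => x0 i = 1).card = M) :
    interCard x0 u ≤ M := by
  rw [← hMx]
  apply Finset.card_le_card
  intro i hi
  simp only [Finset.mem_filter] at *
  exact ⟨hi.1, hi.2.1⟩

lemma interCard_eq_imp {n : ℕ} (x0 u : Fin n → ℝ) (M : ℕ)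
    (h01u : ∀ i, u i = 0 ∨ u i = 1) (h01x : ∀ i, x0 i = 0 ∨ x0 i = 1)
    (hMu : (Finset.univ.filter fun i : Fin n => u i = 1).card = M)
    (hMx : (Finset.univ.filter fun i : Fin n => x0 i = 1).card = M)
    (hIC : interCard x0 u = M) : u = x0 := by
  have hsub1 : (Finset.univ.filter fun i : Fin n => x0 i = 1 ∧ u i = 1)
      ⊆ (Finset.univ.filter fun i : Fin n => u i = 1) := by
    intro i hi; simp only [Finset.mem_filter] at *; exact ⟨hi.1, hi.2.2⟩
  have hsub2 : (Finset.univ.filter fun i : Fin n => x0 i = 1 ∧ u i = 1)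
      ⊆ (Finset.univ.filter fun i : Fin n => x0 i = 1) := by
    intro i hi; simp only [Finset.mem_filter] at *; exact ⟨hi.1, hi.2.1⟩
  have he1 : (Finset.univ.filter fun i : Fin n => x0 i = 1 ∧ u i = 1)
      = (Finset.univ.filter fun i : Fin n => u i = 1) :=
    Finset.eq_of_subset_of_card_le hsub1 (by rw [hMu]; exact le_of_eq hIC.symm)
  have he2 : (Finset.univ.filter fun i : Fin n => x0 i = 1 ∧ u i = 1)
      = (Finset.univ.filter fun i : Fin n => x0 i = 1) :=
    Finset.eq_of_subset_of_card_le hsub2 (by rw [hMx]; exact le_of_eq hIC.symm)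
  funext i
  rcases h01u i with h | h <;> rcases h01x i with h0 | h0
  · rw [h, h0]
  · exfalso
    have : i ∈ (Finset.univ.filter fun i : Fin n => x0 i = 1) := by
      simp only [Finset.mem_filter]; exact ⟨Finset.mem_univ i, h0⟩
    rw [← he2, he1] at this
    simp only [Finset.mem_filter] at this
    rw [h] at this; norm_num at this
  · exfalso
    have : i ∈ (Finset.univ.filter fun i : Fin n => u i = 1) := by
      simp only [Finset.mem_filter]; exact ⟨Finset.mem_univ i, h⟩
    rw [← he1, he2] at this
    simp only [Finset.mem_filter] at this
    rw [h0] at this; norm_num at this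
  · rw [h, h0]

lemma interCard_self {n : ℕ} (x0 : Fin n → ℝ) (M : ℕ)
    (hMx : (Finset.univ.filter fun i : Fin n => x0 i = 1).card = M) :
    interCard x0 x0 = M := by
  rw [← hMx]
  unfold interCard
  congr 1
  apply Finset.filter_congr
  intro i _
  simp [and_self]

/-- Lemma 3.6: if every vertex of the 0/1 polytope has exactly `M` coordinates equal
to `1`, the Slim Shadow rule takes at most `M` steps and reaches a `c`-maximum. -/
theorem slim_shadow_sparsity_bound {n : ℕ} (P : Set (Fin n → ℝ)) (hP : IsPolytope01 P)
    (M : ℕ)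
    (hM : ∀ u, IsVertex P u → (Finset.univ.filter fun i : Fin n => u i = 1).card = M)
    (c : Fin n → ℝ) (x0 : Fin n → ℝ) (hx0 : IsVertex P x0)
    (v : Fin n → ℝ) (hv : v = fun i => 1 - 2 * x0 i) :
    ∀ (k : ℕ) (x : ℕ → Fin n → ℝ), ShadowPath P c v k x → x 0 = x0 →
      k ≤ M ∧ ∃ i ≤ k, ∀ y ∈ P, dotR c y ≤ dotR c (x i) := by
  obtain ⟨V, hVne, hV01, hPV⟩ := hP
  subst hPV
  intro k x hpath hx0eq
  obtain ⟨hvert, hstep, hlast⟩ := hpath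
  -- basic 0/1 facts
  have hVmem : ∀ u, IsVertex (convexHull ℝ (V : Set (Fin n → ℝ))) u → u ∈ V := by
    intro u hu
    exact_mod_cast extremePoints_convexHull_subset hu
  have h01 : ∀ u, IsVertex (convexHull ℝ (V : Set (Fin n → ℝ))) u → ∀ i, u i = 0 ∨ u i = 1 :=
    fun u hu i => hV01 u (hVmem u hu) i
  have hMx : (Finset.univ.filter fun i : Fin n => x0 i = 1).card = M := hM x0 hx0
  have hdotv : ∀ u, IsVertex (convexHull ℝ (V : Set (Fin n → ℝ))) u →
      dotR v u = (M : ℝ) - 2 * (interCard x0 u : ℝ) := by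
    intro u hu
    rw [hv]
    exact dotv_eq x0 u M (h01 u hu) (h01 x0 hx0) (hM u hu)
  have hICx0 : interCard x0 x0 = M := interCard_self x0 M hMx
  have hmin : ∀ u, IsVertex (convexHull ℝ (V : Set (Fin n → ℝ))) u → u ≠ x0 →
      dotR v x0 < dotR v u := by
    intro u hu hne
    have h1 : interCard x0 u < M :=
      lt_of_le_of_ne (interCard_le x0 u M hMx)
        (fun h => hne (interCard_eq_imp x0 u M (h01 u hu) (h01 x0 hx0) (hM u hu) hMx h))
    rw [hdotv u hu, hdotv x0 hx0, hICx0]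
    have : (interCard x0 u : ℝ) < (M : ℝ) := by exact_mod_cast h1
    linarith
  -- Part A : k ≤ M
  have hNdec : ∀ i, i < k → interCard x0 (x (i+1)) < interCard x0 (x i) := by
    intro i hi
    have himp := (hstep i hi).1.2
    rw [hdotv (x i) (hvert i hi.le), hdotv (x (i+1)) (hvert (i+1) hi)] at himp
    have : (interCard x0 (x (i+1)) : ℝ) < (interCard x0 (x i) : ℝ) := by linarith
    exact_mod_cast this
  have hbound : ∀ i, i ≤ k → interCard x0 (x i) + i ≤ M := by
    intro i
    induction i with
    | zero =>
        intro _
        have : interCard x0 (x 0) = M := by rw [hx0eq]; exact hICx0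
        omega
    | succ i ihi =>
        intro h
        have h1 := hNdec i (by omega)
        have h2 := ihi (by omega)
        omega
  have hkM : k ≤ M := by have := hbound k le_rfl; omega
  refine ⟨hkM, ?_⟩
  -- Part B : optimality
  have hlocP : ∀ p, IsVertex (convexHull ℝ (V : Set (Fin n → ℝ))) p → ∀ lam : ℝ,
      (∀ u, Adjacent (convexHull ℝ (V : Set (Fin n → ℝ))) p u →
        dotR c u - lam * dotR v u ≤ dotR c p - lam * dotR v p) →
      ∀ y ∈ convexHull ℝ (V : Set (Fin n → ℝ)),
        dotR c y - lam * dotR v y ≤ dotR c p - lam * dotR v p := by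
    intro p hp lam H y hy
    have H' : ∀ u, u ∈ (convexHull ℝ (V : Set (Fin n → ℝ))).extremePoints ℝ → u ≠ p →
        IsExtreme ℝ (convexHull ℝ (V : Set (Fin n → ℝ))) (segment ℝ p u) →
        dotR (fun i => c i - lam * v i) u ≤ dotR (fun i => c i - lam * v i) p := by
      intro u hu1 hu2 hu3
      rw [dotR_comb, dotR_comb]
      exact H u ⟨hp, hu1, Ne.symm hu2, hu3⟩
    have := loc V p (fun i => c i - lam * v i) hp H' y hy
    rwa [dotR_comb, dotR_comb] at this
  have hadj0 : ∀ u, Adjacent (convexHull ℝ (V : Set (Fin n → ℝ))) (x 0) u →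
      ImpNbr (convexHull ℝ (V : Set (Fin n → ℝ))) v (x 0) u := by
    intro u hadj
    refine ⟨hadj, ?_⟩
    have hne : u ≠ x0 := by rw [← hx0eq]; exact Ne.symm hadj.2.2.1
    have := hmin u hadj.2.1 hne
    rw [hx0eq]
    exact this
  rcases Nat.eq_zero_or_pos k with hk0 | hkpos
  · subst hk0
    refine ⟨0, le_rfl, ?_⟩
    have hH : ∀ u, Adjacent (convexHull ℝ (V : Set (Fin n → ℝ))) (x 0) u →
        dotR c u - 0 * dotR v u ≤ dotR c (x 0) - 0 * dotR v (x 0) :=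
      fun u hadj => absurd (hadj0 u hadj) (hlast u)
    intro y hy
    have := hlocP (x 0) (hvert 0 le_rfl) 0 hH y hy
    linarith
  · set lam : ℕ → ℝ := fun i => dotR c (x (i+1) - x i) / dotR v (x (i+1) - x i) with hlam
    have hb : ∀ i, i < k → 0 < dotR v (x (i+1) - x i) := by
      intro i hi
      have := (hstep i hi).1.2
      rw [dotR_sub]
      linarith
    have hslope : ∀ i, i < k → ∀ u, ImpNbr (convexHull ℝ (V : Set (Fin n → ℝ))) v (x i) u →
        dotR c u - dotR c (x i) ≤ lam i * dotR v u - lam i * dotR v (x i) := by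
      intro i hi u hu
      have hdiv := (hstep i hi).2 u hu
      have hv' : 0 < dotR v (u - x i) := by
        have := hu.2; rw [dotR_sub]; linarith
      have h2 : dotR c (u - x i) ≤ lam i * dotR v (u - x i) := (div_le_iff₀ hv').1 hdiv
      rw [dotR_sub, dotR_sub, mul_sub] at h2
      linarith
    have htrans : ∀ i, i < k →
        dotR c (x (i+1)) - lam i * dotR v (x (i+1)) = dotR c (x i) - lam i * dotR v (x i) := by
      intro i hi
      have hbpos := hb i hi
      have h1 : lam i * dotR v (x (i+1) - x i) = dotR c (x (i+1) - x i) :=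
        div_mul_cancel₀ _ (ne_of_gt hbpos)
      rw [dotR_sub, dotR_sub, mul_sub] at h1
      linarith
    have hC : ∀ i, i < k → ∀ y ∈ convexHull ℝ (V : Set (Fin n → ℝ)),
        dotR c y - lam i * dotR v y ≤ dotR c (x i) - lam i * dotR v (x i) := by
      intro i
      induction i with
      | zero =>
          intro h0
          apply hlocP (x 0) (hvert 0 (by omega)) (lam 0)
          intro u hadj
          have := hslope 0 h0 u (hadj0 u hadj)
          linarith
      | succ i ihi =>
          intro h
          have hik : i < k := by omega
          have hCi := ihi hik
          have hOpt' : ∀ y ∈ convexHull ℝ (V : Set (Fin n → ℝ)),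
              dotR c y - lam i * dotR v y ≤ dotR c (x (i+1)) - lam i * dotR v (x (i+1)) := by
            intro y hy; rw [htrans i hik]; exact hCi y hy
          have hlamle : lam (i+1) ≤ lam i := by
            have hmem : x (i+2) ∈ convexHull ℝ (V : Set (Fin n → ℝ)) := (hvert (i+2) (by omega)).1
            have h2 := hOpt' (x (i+2)) hmem
            have hbpos := hb (i+1) h
            have h3 : dotR c (x (i+2) - x (i+1)) ≤ lam i * dotR v (x (i+2) - x (i+1)) := by
              rw [dotR_sub, dotR_sub, mul_sub]; linarith
            exact (div_le_iff₀ hbpos).2 h3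
          apply hlocP (x (i+1)) (hvert (i+1) (by omega)) (lam (i+1))
          intro u hadj
          by_cases himp : dotR v (x (i+1)) < dotR v u
          · have := hslope (i+1) h u ⟨hadj, himp⟩
            linarith
          · push_neg at himp
            have h3 := hOpt' u hadj.2.1.1
            nlinarith [mul_nonneg (sub_nonneg.2 hlamle) (sub_nonneg.2 himp)]
    by_cases hneg : ∃ i, i < k ∧ lam i ≤ 0
    · have hspec := Nat.find_spec hneg
      set i0 := Nat.find hneg with hi0
      have hi0k : i0 < k := hspec.1
      have hi0le : lam i0 ≤ 0 := hspec.2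
      refine ⟨i0, hi0k.le, ?_⟩
      rcases Nat.eq_zero_or_pos i0 with h00 | h0pos
      · rw [h00]
        have hk0' : 0 < k := h00 ▸ hi0k
        have hle : lam 0 ≤ 0 := h00 ▸ hi0le
        have hH : ∀ u, Adjacent (convexHull ℝ (V : Set (Fin n → ℝ))) (x 0) u →
            dotR c u - 0 * dotR v u ≤ dotR c (x 0) - 0 * dotR v (x 0) := by
          intro u hadj
          have himp := hadj0 u hadj
          have h1 := hslope 0 hk0' u himp
          have h2 := himp.2
          nlinarith [mul_nonneg (neg_nonneg.2 hle) (sub_nonneg.2 h2.le)]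
        intro y hy
        have := hlocP (x 0) (hvert 0 hk0'.le) 0 hH y hy
        linarith
      · have hprevk : i0 - 1 < k := by omega
        have hprevpos : 0 < lam (i0 - 1) := by
          have hmin' := Nat.find_min hneg (show i0 - 1 < i0 by omega)
          push_neg at hmin'
          exact hmin' hprevk
        have hCprev := hC (i0 - 1) hprevk
        have heqp : dotR c (x i0) - lam (i0-1) * dotR v (x i0)
            = dotR c (x (i0-1)) - lam (i0-1) * dotR v (x (i0-1)) := by
          have := htrans (i0-1) hprevk
          have hsucc : i0 - 1 + 1 = i0 := by omega
          rwa [hsucc] at this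
        have hOb := hC i0 hi0k
        intro y hy
        rcases le_or_gt (dotR v y) (dotR v (x i0)) with hcase | hcase
        · have h1 := hCprev y hy
          rw [heqp.symm] at h1
          nlinarith [mul_nonneg hprevpos.le (sub_nonneg.2 hcase)]
        · have h1 := hOb y hy
          nlinarith [mul_nonneg (neg_nonneg.2 hi0le) (sub_nonneg.2 hcase.le)]
    · push_neg at hneg
      refine ⟨k, le_rfl, ?_⟩
      have hk1 : k - 1 < k := by omega
      have hCk := hC (k-1) hk1
      have heqk : dotR c (x k) - lam (k-1) * dotR v (x k)
          = dotR c (x (k-1)) - lam (k-1) * dotR v (x (k-1)) := by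
        have := htrans (k-1) hk1
        have hsucc : k - 1 + 1 = k := by omega
        rwa [hsucc] at this
      have hpos := hneg (k-1) hk1
      have hH : ∀ u, Adjacent (convexHull ℝ (V : Set (Fin n → ℝ))) (x k) u →
          dotR c u - 0 * dotR v u ≤ dotR c (x k) - 0 * dotR v (x k) := by
        intro u hadj
        have hnv : dotR v u ≤ dotR v (x k) := by
          by_contra hcon
          push_neg at hcon
          exact hlast u ⟨hadj, hcon⟩
        have h1 := hCk u hadj.2.1.1
        rw [← heqk] at h1
        nlinarith [mul_nonneg hpos.le (sub_nonneg.2 hnv)]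
      intro y hy
      have := hlocP (x k) (hvert k le_rfl) 0 hH y hy
      linarith
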